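/- Let l ∈ (3/4, 1), ε > 0 with l + ε ≤ 1, and set α = l + ε. Define R_1 = Σ_{k=⌈lN⌉}^{⌈αN⌉−1} 3^k·binomial(N,k) and R_2 = Σ_{k=⌈αN⌉}^{N} 3^k·binomial(N,k). Then R_2/R_1 ≤ 4^N·exp(−N·D(α‖3/4)) / (3^{lN}·binomial(N,⌈lN⌉)), and this ratio tends to 0 as N → ∞. -/

import Mathlib

open Finset Real Filter

/-- Kullback–Leibler divergence between Bernoulli(α) and Bernoulli(β). -/
noncomputable def klBer (α β : ℝ) : ℝ :=
  α * Real.log (α / β) + (1 - α) * Real.log ((1 - α) / (1 - β))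

/-- `R₁`: the tail-sum block from `⌈lN⌉` to `⌈αN⌉ - 1`. -/
noncomputable def blockR1 (l α : ℝ) (N : ℕ) : ℝ :=
  ∑ k ∈ Finset.Ico ⌈l * N⌉₊ ⌈α * N⌉₊, (3 : ℝ) ^ k * (N.choose k : ℝ)

/-- `R₂`: the tail-sum block from `⌈αN⌉` to `N`. -/
noncomputable def blockR2 (α : ℝ) (N : ℕ) : ℝ :=
  ∑ k ∈ Finset.Icc ⌈α * N⌉₊ N, (3 : ℝ) ^ k * (N.choose k : ℝ)

/-- per-run exponent -/
noncomputable def fEnt (x : ℝ) : ℝ := x * Real.log 3 - x * Real.log x - (1-x) * Real.log (1-x)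

lemma fEnt_strictAntiOn : StrictAntiOn fEnt (Set.Icc (3/4 : ℝ) 1) := by
  have hcont : Continuous fEnt := by
    unfold fEnt
    exact ((continuous_id.mul continuous_const).sub Real.continuous_mul_log).sub
      (Real.continuous_mul_log.comp (continuous_const.sub continuous_id))
  apply strictAntiOn_of_deriv_neg (convex_Icc _ _) hcont.continuousOn
  intro x hx
  rw [interior_Icc] at hx
  obtain ⟨hx1, hx2⟩ := hx
  have hx0 : (0:ℝ) < x := by linarith
  have hx1' : (0:ℝ) < 1 - x := by linarith
  have h1 : HasDerivAt (fun y : ℝ => y * Real.log y) (Real.log x + 1) x :=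
    Real.hasDerivAt_mul_log hx0.ne'
  have h2 : HasDerivAt (fun y : ℝ => (1-y) * Real.log (1-y))
      ((Real.log (1-x) + 1) * (-1)) x := by
    have := (Real.hasDerivAt_mul_log hx1'.ne').comp x
      (((hasDerivAt_id x).const_sub 1))
    exact this
  have h3 : HasDerivAt fEnt (Real.log 3 - (Real.log x + 1) - (Real.log (1-x) + 1) * (-1)) x := by
    unfold fEnt
    have := (((hasDerivAt_id x).mul_const (Real.log 3)).sub h1).sub h2
    exact this.congr_deriv (by ring)
  rw [h3.deriv]
  have hlt : Real.log (3 * (1 - x)) < Real.log x := by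
    apply Real.log_lt_log (by linarith)
    linarith
  rw [Real.log_mul (by norm_num) hx1'.ne'] at hlt
  linarith

lemma log4_sub_klBer (α : ℝ) (h1 : 3/4 < α) (h2 : α ≤ 1) :
    Real.log 4 - klBer α (3/4) = fEnt α := by
  have hα0 : (0:ℝ) < α := by linarith
  rcases eq_or_lt_of_le h2 with h|h
  · subst h
    unfold klBer fEnt
    norm_num
    rw [Real.log_div (by norm_num) (by norm_num)]
    ring
  · have h1α : (0:ℝ) < 1 - α := by linarith
    unfold klBer fEnt
    have e1 : Real.log (α / (3/4)) = Real.log α - (Real.log 3 - Real.log 4) := by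
      rw [Real.log_div hα0.ne' (by norm_num), Real.log_div (by norm_num) (by norm_num)]
    have e2 : Real.log ((1-α) / (1 - 3/4)) = Real.log (1-α) + Real.log 4 := by
      rw [show (1:ℝ) - 3/4 = 4⁻¹ by norm_num, Real.log_div h1α.ne' (by norm_num),
        Real.log_inv]
      ring
    rw [e1, e2]
    ring

lemma chernoff (α : ℝ) (h1 : 3/4 < α) (h2 : α ≤ 1) (N : ℕ) :
    blockR2 α N ≤ (4:ℝ) ^ N * Real.exp (-(N:ℝ) * klBer α (3/4)) := by
  rcases eq_or_lt_of_le h2 with h|h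
  · -- α = 1
    subst h
    have hm : ⌈(1:ℝ) * N⌉₊ = N := by simp
    rw [blockR2, hm, Finset.Icc_self, Finset.sum_singleton, Nat.choose_self]
    have hkl : klBer 1 (3/4) = Real.log (4/3) := by
      unfold klBer
      norm_num
    rw [hkl]
    have : Real.exp (-(N:ℝ) * Real.log (4/3)) = ((3:ℝ)/4) ^ N := by
      rw [show -(N:ℝ) * Real.log (4/3) = (N:ℝ) * Real.log (3/4) by
        rw [show (3:ℝ)/4 = (4/3)⁻¹ by norm_num, Real.log_inv]; ring]
      rw [← Real.log_pow, Real.exp_log (by positivity)]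
    rw [this, ← mul_pow]
    norm_num
  · -- α < 1
    have hα0 : (0:ℝ) < α := by linarith
    have h1α : (0:ℝ) < 1 - α := by linarith
    set c : ℝ := α / (3 * (1 - α)) with hc
    have hc0 : 0 < c := by positivity
    have hc1 : 1 ≤ c := by
      rw [hc, le_div_iff₀ (by positivity)]
      linarith
    set m := ⌈α * N⌉₊ with hm
    have hmN : (α * N : ℝ) ≤ m := Nat.le_ceil _
    -- step 1: blockR2 ≤ (1+3c)^N / c^m
    have step1 : blockR2 α N ≤ (3*c+1) ^ N / c ^ m := by
      have hsub : Finset.Icc m N ⊆ Finset.range (N+1) := by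
        intro k hk
        simp only [Finset.mem_Icc] at hk
        simp [Nat.lt_succ_iff, hk.2]
      have hterm : ∀ k ∈ Finset.Icc m N,
          (3:ℝ)^k * (N.choose k : ℝ) ≤ ((3*c)^k * (N.choose k : ℝ)) / c ^ m := by
        intro k hk
        simp only [Finset.mem_Icc] at hk
        have hkm : m ≤ k := hk.1
        have : (3:ℝ)^k ≤ (3*c)^k / c^m := by
          rw [mul_pow, le_div_iff₀ (by positivity)]
          have : c ^ m ≤ c ^ k := pow_le_pow_right₀ hc1 hkm
          exact mul_le_mul_of_nonneg_left this (by positivity)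
        calc (3:ℝ)^k * (N.choose k : ℝ) ≤ ((3*c)^k / c^m) * (N.choose k : ℝ) := by
              apply mul_le_mul_of_nonneg_right this (Nat.cast_nonneg _)
          _ = ((3*c)^k * (N.choose k : ℝ)) / c ^ m := by ring
      calc blockR2 α N ≤ ∑ k ∈ Finset.Icc m N, ((3*c)^k * (N.choose k : ℝ)) / c ^ m :=
            Finset.sum_le_sum hterm
        _ ≤ ∑ k ∈ Finset.range (N+1), ((3*c)^k * (N.choose k : ℝ)) / c ^ m := by
            apply Finset.sum_le_sum_of_subset_of_nonneg hsub
            intro k _ _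
            positivity
        _ = (∑ k ∈ Finset.range (N+1), (3*c)^k * (N.choose k : ℝ)) / c ^ m := by
            rw [Finset.sum_div]
        _ = (3*c+1) ^ N / c ^ m := by
            rw [add_pow]
            congr 1
            apply Finset.sum_congr rfl
            intro k _
            simp
    -- step 2: (3c+1)^N / c^m ≤ (3c+1)^N / c^(αN)
    have hc3 : (0:ℝ) < 3*c+1 := by positivity
    have step2 : (3*c+1) ^ N / c ^ m ≤ (3*c+1) ^ N / c ^ (α * N : ℝ) := by
      apply div_le_div_of_nonneg_left (by positivity) (Real.rpow_pos_of_pos hc0 _)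
      rw [← Real.rpow_natCast c m]
      exact Real.rpow_le_rpow_of_exponent_le hc1 hmN
    -- step 3: equality with the exp form
    have step3 : (3*c+1) ^ N / c ^ (α * N : ℝ) =
        (4:ℝ) ^ N * Real.exp (-(N:ℝ) * klBer α (3/4)) := by
      have e1 : (3*c+1 : ℝ) = (1 - α)⁻¹ := by
        have hne : (1:ℝ) - α ≠ 0 := h1α.ne'
        rw [hc]
        field_simp
        ring
      have hlogc : Real.log c = Real.log α - (Real.log 3 + Real.log (1-α)) := by
        rw [hc, Real.log_div hα0.ne' (by positivity), Real.log_mul (by norm_num) h1α.ne']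
      have hkl : klBer α (3/4) =
          α * (Real.log α - (Real.log 3 - Real.log 4)) +
          (1-α) * (Real.log (1-α) + Real.log 4) := by
        unfold klBer
        rw [Real.log_div hα0.ne' (by norm_num), Real.log_div (by norm_num) (by norm_num),
          show (1:ℝ) - 3/4 = 4⁻¹ by norm_num, Real.log_div h1α.ne' (by norm_num),
          Real.log_inv]
        ring
      rw [e1]
      rw [show ((1-α)⁻¹ : ℝ) ^ N = Real.exp ((N:ℝ) * Real.log (1-α)⁻¹) by
        rw [← Real.log_pow, Real.exp_log (by positivity)]]
      rw [show ((4:ℝ)) ^ N = Real.exp ((N:ℝ) * Real.log 4) by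
        rw [← Real.log_pow, Real.exp_log (by positivity)]]
      rw [Real.rpow_def_of_pos hc0, ← Real.exp_sub, ← Real.exp_add]
      congr 1
      rw [Real.log_inv, hlogc, hkl]
      ring
    calc blockR2 α N ≤ (3*c+1) ^ N / c ^ m := step1
      _ ≤ (3*c+1) ^ N / c ^ (α * N : ℝ) := step2
      _ = _ := step3

lemma choose_lower (N k : ℕ) (hN : 0 < N) (hk : k ≤ N) :
    (1:ℝ) ≤ (N+1 : ℝ) * (N.choose k : ℝ) * ((k:ℝ)/N)^k * (1 - (k:ℝ)/N)^(N-k) := by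
  set p : ℝ := (k:ℝ)/N with hp
  have hN0 : (0:ℝ) < N := Nat.cast_pos.mpr hN
  have hp0 : 0 ≤ p := by positivity
  have hp1 : p ≤ 1 := by
    rw [hp, div_le_one hN0]
    exact_mod_cast hk
  have h1p : 0 ≤ 1 - p := by linarith
  set T : ℕ → ℝ := fun j => (N.choose j : ℝ) * p^j * (1-p)^(N-j) with hT
  have hT0 : ∀ j, 0 ≤ T j := fun j => by
    simp only [hT]; positivity
  have hNk : ((N - k : ℕ) : ℝ) = (N:ℝ) - k := Nat.cast_sub hk
  have hp1N : (1 - p) * N = ((N - k : ℕ) : ℝ) := by rw [hNk, hp]; field_simp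
  have hpN : p * N = (k:ℝ) := by rw [hp]; field_simp
  have step_up : ∀ j, j < k → T j ≤ T (j+1) := by
    intro j hj
    have hjN : j < N := lt_of_lt_of_le hj hk
    have hnat : N.choose j * (N - k) ≤ N.choose (j+1) * k := by
      have key : N.choose j * (N - k) * (j+1) ≤ N.choose (j+1) * k * (j+1) := by
        have h1 : N.choose (j+1) * (j+1) = N.choose j * (N - j) :=
          Nat.choose_succ_right_eq N j
        calc N.choose j * (N - k) * (j+1) = N.choose j * ((N-k) * (j+1)) := by ring
          _ ≤ N.choose j * ((N-j) * k) := by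
              exact Nat.mul_le_mul_left _ (Nat.mul_le_mul (Nat.sub_le_sub_left hj.le N) hj)
          _ = N.choose (j+1) * (j+1) * k := by rw [h1]; ring
          _ = N.choose (j+1) * k * (j+1) := by ring
      exact Nat.le_of_mul_le_mul_right key (Nat.succ_pos j)
    have hreal : (N.choose j : ℝ) * (1-p) ≤ (N.choose (j+1) : ℝ) * p := by
      rw [← mul_le_mul_iff_of_pos_right hN0]
      calc (N.choose j : ℝ) * (1-p) * N = (N.choose j : ℝ) * ((N-k:ℕ):ℝ) := by
            rw [mul_assoc, hp1N]
        _ ≤ (N.choose (j+1) : ℝ) * (k:ℝ) := by exact_mod_cast hnat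
        _ = (N.choose (j+1) : ℝ) * p * N := by rw [mul_assoc, hpN]
    have hNj : N - j = (N - (j+1)) + 1 := by omega
    have e1 : T j = ((N.choose j : ℝ) * (1-p)) * (p^j * (1-p)^(N-(j+1))) := by
      simp only [hT, hNj, pow_succ]; ring
    have e2 : T (j+1) = ((N.choose (j+1) : ℝ) * p) * (p^j * (1-p)^(N-(j+1))) := by
      simp only [hT, pow_succ]; ring
    rw [e1, e2]
    exact mul_le_mul_of_nonneg_right hreal (by positivity)
  have step_down : ∀ j, k ≤ j → j < N → T (j+1) ≤ T j := by
    intro j hj hjN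
    have hnat : N.choose (j+1) * k ≤ N.choose j * (N - k) := by
      have key : N.choose (j+1) * k * (j+1) ≤ N.choose j * (N - k) * (j+1) := by
        have h1 : N.choose (j+1) * (j+1) = N.choose j * (N - j) :=
          Nat.choose_succ_right_eq N j
        calc N.choose (j+1) * k * (j+1) = N.choose (j+1) * (j+1) * k := by ring
          _ = N.choose j * ((N-j) * k) := by rw [h1]; ring
          _ ≤ N.choose j * ((N-k) * (j+1)) := by
              exact Nat.mul_le_mul_left _
                (Nat.mul_le_mul (Nat.sub_le_sub_left hj N) (Nat.le_succ_of_le hj))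
          _ = N.choose j * (N - k) * (j+1) := by ring
      exact Nat.le_of_mul_le_mul_right key (Nat.succ_pos j)
    have hreal : (N.choose (j+1) : ℝ) * p ≤ (N.choose j : ℝ) * (1-p) := by
      rw [← mul_le_mul_iff_of_pos_right hN0]
      calc (N.choose (j+1) : ℝ) * p * N = (N.choose (j+1) : ℝ) * (k:ℝ) := by
            rw [mul_assoc, hpN]
        _ ≤ (N.choose j : ℝ) * ((N-k:ℕ):ℝ) := by exact_mod_cast hnat
        _ = (N.choose j : ℝ) * (1-p) * N := by rw [mul_assoc, hp1N]
    have hNj : N - j = (N - (j+1)) + 1 := by omega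
    have e1 : T j = ((N.choose j : ℝ) * (1-p)) * (p^j * (1-p)^(N-(j+1))) := by
      simp only [hT, hNj, pow_succ]; ring
    have e2 : T (j+1) = ((N.choose (j+1) : ℝ) * p) * (p^j * (1-p)^(N-(j+1))) := by
      simp only [hT, pow_succ]; ring
    rw [e1, e2]
    exact mul_le_mul_of_nonneg_right hreal (by positivity)
  have up : ∀ j, j ≤ k → T j ≤ T k := by
    intro j hj
    have haux : ∀ k', j ≤ k' → (k' ≤ k → T j ≤ T k') := by
      intro k' hk'
      induction k', hk' using Nat.le_induction with
      | base => intro _; exact le_refl _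
      | succ n hn ih =>
          intro hnk
          exact le_trans (ih (by omega)) (step_up n (by omega))
    exact haux k hj le_rfl
  have down : ∀ j, k ≤ j → j ≤ N → T j ≤ T k := by
    intro j hj
    induction j, hj using Nat.le_induction with
    | base => intro _; exact le_refl _
    | succ n hn ih =>
        intro hnN
        exact le_trans (step_down n hn (by omega)) (ih (by omega))
  have hmax : ∀ j ∈ Finset.range (N+1), T j ≤ T k := by
    intro j hj
    simp only [Finset.mem_range, Nat.lt_succ_iff] at hj
    rcases le_total j k with h|h
    · exact up j h
    · exact down j h hj
  have hsum : ∑ j ∈ Finset.range (N+1), T j = 1 := by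
    have := add_pow p (1-p) N
    simp only [add_sub_cancel, one_pow] at this
    rw [this]
    apply Finset.sum_congr rfl
    intro j _
    simp only [hT]; ring
  have hfin : (1:ℝ) ≤ (N+1 : ℝ) * T k := by
    have h := Finset.sum_le_card_nsmul (Finset.range (N+1)) T (T k) hmax
    rw [Finset.card_range, hsum] at h
    calc (1:ℝ) ≤ (N+1) • T k := h
      _ = ((N+1 : ℕ) : ℝ) * T k := by rw [nsmul_eq_mul]
      _ = (N+1 : ℝ) * T k := by push_cast; ring
  calc (1:ℝ) ≤ (N+1 : ℝ) * T k := hfin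
    _ = (N+1 : ℝ) * (N.choose k : ℝ) * p^k * (1-p)^(N-k) := by simp only [hT]; ring

lemma exp_fEnt_le (N m : ℕ) (hm0 : 0 < m) (hmN : m < N) :
    Real.exp ((N:ℝ) * fEnt ((m:ℝ)/N)) ≤ (N+1:ℝ) * ((3:ℝ)^m * (N.choose m : ℝ)) := by
  have hN : 0 < N := lt_trans hm0 hmN
  have hN0 : (0:ℝ) < N := Nat.cast_pos.mpr hN
  set p : ℝ := (m:ℝ)/N with hp
  have hp0 : 0 < p := by positivity
  have hp1 : p < 1 := by
    rw [hp, div_lt_one hN0]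
    exact_mod_cast hmN
  have h1p : 0 < 1 - p := by linarith
  have hpN : p * N = (m:ℝ) := by rw [hp]; field_simp
  have hNm : ((N - m : ℕ) : ℝ) = (N:ℝ) - m := Nat.cast_sub hmN.le
  have h1pN : (1-p) * N = ((N - m : ℕ) : ℝ) := by rw [hNm, hp]; field_simp
  have hexp : Real.exp ((N:ℝ) * fEnt p) =
      (3:ℝ)^m / (p^m * (1-p)^(N-m)) := by
    have e : (N:ℝ) * fEnt p =
        (m:ℝ) * Real.log 3 - (m:ℝ) * Real.log p - ((N-m:ℕ):ℝ) * Real.log (1-p) := by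
      have : (N:ℝ) * fEnt p = (p*N) * Real.log 3 - (p*N) * Real.log p
          - ((1-p)*N) * Real.log (1-p) := by unfold fEnt; ring
      rw [this, hpN, h1pN]
    rw [e]
    rw [sub_sub, Real.exp_sub, Real.exp_add]
    rw [show (m:ℝ) * Real.log 3 = Real.log ((3:ℝ)^m) by rw [Real.log_pow]]
    rw [show (m:ℝ) * Real.log p = Real.log (p^m) by rw [Real.log_pow]]
    rw [show ((N-m:ℕ):ℝ) * Real.log (1-p) = Real.log ((1-p)^(N-m)) by rw [Real.log_pow]]
    rw [Real.exp_log (by positivity), Real.exp_log (by positivity),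
      Real.exp_log (by positivity)]
  rw [hexp]
  rw [div_le_iff₀ (by positivity)]
  have h := choose_lower N m hN hmN.le
  calc (3:ℝ)^m = (3:ℝ)^m * 1 := by ring
    _ ≤ (3:ℝ)^m * ((N+1 : ℝ) * (N.choose m : ℝ) * p^m * (1 - p)^(N-m)) := by
        apply mul_le_mul_of_nonneg_left _ (by positivity)
        exact h
    _ = (N+1:ℝ) * ((3:ℝ)^m * (N.choose m : ℝ)) * (p^m * (1-p)^(N-m)) := by ring

theorem block_ratio_bound_and_limit (l ε : ℝ) (hl : l ∈ Set.Ioo (3/4 : ℝ) 1)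
    (hε : 0 < ε) (hle : l + ε ≤ 1) (α : ℝ) (hα : α = l + ε) :
    (∀ N : ℕ, 1 ≤ N →
      blockR2 α N / blockR1 l α N ≤
        (4 : ℝ) ^ N * Real.exp (-(N : ℝ) * klBer α (3/4)) /
          ((3 : ℝ) ^ (⌈l * N⌉₊) * (N.choose ⌈l * N⌉₊ : ℝ))) ∧
    Tendsto (fun N : ℕ => blockR2 α N / blockR1 l α N) atTop (nhds 0) := by
  obtain ⟨hl34, hl1⟩ := hl
  have hα1 : 3/4 < α := by rw [hα]; linarith
  have hα2 : α ≤ 1 := by rw [hα]; exact hle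
  have hbound : ∀ N : ℕ, 1 ≤ N →
      blockR2 α N / blockR1 l α N ≤
        (4 : ℝ) ^ N * Real.exp (-(N : ℝ) * klBer α (3/4)) /
          ((3 : ℝ) ^ (⌈l * N⌉₊) * (N.choose ⌈l * N⌉₊ : ℝ)) := by
    intro N hN
    set m1 := ⌈l * (N:ℝ)⌉₊ with hm1
    set m2 := ⌈α * (N:ℝ)⌉₊ with hm2
    have hm1N : m1 ≤ N := by
      rw [hm1]
      apply Nat.ceil_le.mpr
      have : l * N ≤ 1 * N := by
        apply mul_le_mul_of_nonneg_right hl1.le (Nat.cast_nonneg N)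
      simpa using this
    have hd : 0 < (3:ℝ)^m1 * (N.choose m1 : ℝ) :=
      mul_pos (by positivity) (Nat.cast_pos.mpr (Nat.choose_pos hm1N))
    have hR2 := chernoff α hα1 hα2 N
    have hnum0 : 0 ≤ (4:ℝ) ^ N * Real.exp (-(N:ℝ) * klBer α (3/4)) := by positivity
    by_cases hcase : m1 < m2
    · have hR1 : (3:ℝ)^m1 * (N.choose m1 : ℝ) ≤ blockR1 l α N := by
        unfold blockR1
        apply Finset.single_le_sum (f := fun k => (3:ℝ)^k * (N.choose k : ℝ))
        · intro k _; positivity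
        · rw [Finset.mem_Ico]; exact ⟨le_rfl, hcase⟩
      exact div_le_div₀ hnum0 hR2 hd hR1
    · have hz : blockR1 l α N = 0 := by
        unfold blockR1
        rw [Finset.Ico_eq_empty (by omega), Finset.sum_empty]
      rw [hz, div_zero]
      positivity
  refine ⟨hbound, ?_⟩
  -- the limit
  set β := l + ε/2 with hβ
  have hβ1 : 3/4 < β := by linarith
  have hβα : β < α := by rw [hα, hβ]; linarith
  have hβ2 : β < 1 := lt_of_lt_of_le hβα hα2
  have hβmem : β ∈ Set.Icc (3/4:ℝ) 1 := ⟨hβ1.le, hβ2.le⟩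
  have hαmem : α ∈ Set.Icc (3/4:ℝ) 1 := ⟨hα1.le, hα2⟩
  have hgap : fEnt α < fEnt β := fEnt_strictAntiOn hβmem hαmem hβα
  set r : ℝ := Real.exp (fEnt α - fEnt β) with hr
  have hr0 : 0 ≤ r := (Real.exp_pos _).le
  have hr1 : r < 1 := by
    rw [hr, Real.exp_lt_one_iff]
    linarith
  have hglim : Tendsto (fun N : ℕ => ((N:ℝ)+1) * r^N) atTop (nhds 0) := by
    have h1 := tendsto_self_mul_const_pow_of_lt_one hr0 hr1
    have h2 := tendsto_pow_atTop_nhds_zero_of_abs_lt_one (abs_lt.mpr ⟨by linarith, hr1⟩)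
    have := h1.add h2
    simp only [add_zero] at this
    convert this using 2 with N
    ring
  apply squeeze_zero' (g := fun N : ℕ => ((N:ℝ)+1) * r^N)
  · filter_upwards [eventually_ge_atTop 1] with N _
    apply div_nonneg
    · unfold blockR2; apply Finset.sum_nonneg; intro k _; positivity
    · unfold blockR1; apply Finset.sum_nonneg; intro k _; positivity
  · have hev : ∀ᶠ N : ℕ in atTop, (2/ε : ℝ) < N ∧ 1 ≤ N := by
      apply Eventually.and
      · exact tendsto_natCast_atTop_atTop.eventually_gt_atTop _
      · exact eventually_ge_atTop 1
    filter_upwards [hev] with N hN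
    obtain ⟨hNε, hN1⟩ := hN
    have hN0 : (0:ℝ) < N := by positivity
    set m1 := ⌈l * (N:ℝ)⌉₊ with hm1
    set p : ℝ := (m1:ℝ)/N with hp
    -- bounds on p
    have hlN : l * N ≤ (m1:ℝ) := Nat.le_ceil _
    have hm1u : (m1:ℝ) < l * N + 1 := by
      rw [hm1]
      apply Nat.ceil_lt_add_one
      positivity
    have hpl : l ≤ p := by
      rw [hp, le_div_iff₀ hN0]
      linarith
    have hpβ : p < β := by
      rw [hp, div_lt_iff₀ hN0]
      have h2N : 1 < ε/2 * N := by
        rw [← div_lt_iff₀' (by linarith)]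
        calc (1:ℝ)/(ε/2) = 2/ε := by ring
          _ < N := hNε
      calc (m1:ℝ) < l * N + 1 := hm1u
        _ < l * N + ε/2 * N := by linarith
        _ = β * N := by rw [hβ]; ring
    have hp34 : 3/4 < p := lt_of_lt_of_le hl34 hpl
    have hp1 : p < 1 := lt_trans hpβ hβ2
    have hm10 : 0 < m1 := by
      by_contra h
      push_neg at h
      interval_cases m1
      simp only [Nat.cast_zero, zero_div] at hp
      rw [hp] at hp34
      norm_num at hp34
    have hm1N : m1 < N := by
      by_contra h
      push_neg at h
      have : (1:ℝ) ≤ p := by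
        rw [hp, le_div_iff₀ hN0]
        have : (N:ℝ) ≤ m1 := Nat.cast_le.mpr h
        linarith
      linarith
    -- f p ≥ f β
    have hpmem : p ∈ Set.Icc (3/4:ℝ) 1 := ⟨hp34.le, hp1.le⟩
    have hfp : fEnt β < fEnt p := fEnt_strictAntiOn hpmem hβmem hpβ
    -- chain
    have h1 : blockR2 α N / blockR1 l α N ≤
        (4 : ℝ) ^ N * Real.exp (-(N : ℝ) * klBer α (3/4)) /
          ((3 : ℝ) ^ m1 * (N.choose m1 : ℝ)) := hbound N hN1
    have hnum : (4 : ℝ) ^ N * Real.exp (-(N : ℝ) * klBer α (3/4)) =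
        Real.exp ((N:ℝ) * fEnt α) := by
      rw [show ((4:ℝ)) ^ N = Real.exp ((N:ℝ) * Real.log 4) by
        rw [← Real.log_pow, Real.exp_log (by positivity)]]
      rw [← Real.exp_add]
      congr 1
      rw [← log4_sub_klBer α hα1 hα2]
      ring
    have hden : Real.exp ((N:ℝ) * fEnt p) / ((N:ℝ)+1) ≤
        (3:ℝ)^m1 * (N.choose m1 : ℝ) := by
      rw [div_le_iff₀ (by positivity)]
      have := exp_fEnt_le N m1 hm10 hm1N
      rw [← hp] at this
      calc Real.exp ((N:ℝ) * fEnt p) ≤ ((N:ℝ)+1) * ((3:ℝ)^m1 * (N.choose m1 : ℝ)) := this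
        _ = (3:ℝ)^m1 * (N.choose m1 : ℝ) * ((N:ℝ)+1) := by ring
    have hdpos : (0:ℝ) < Real.exp ((N:ℝ) * fEnt p) / ((N:ℝ)+1) := by positivity
    have h2 : (4 : ℝ) ^ N * Real.exp (-(N : ℝ) * klBer α (3/4)) /
          ((3 : ℝ) ^ m1 * (N.choose m1 : ℝ)) ≤
        Real.exp ((N:ℝ) * fEnt α) / (Real.exp ((N:ℝ) * fEnt p) / ((N:ℝ)+1)) := by
      rw [hnum]
      exact div_le_div_of_nonneg_left (Real.exp_pos _).le hdpos hden
    have h3 : Real.exp ((N:ℝ) * fEnt α) / (Real.exp ((N:ℝ) * fEnt p) / ((N:ℝ)+1)) ≤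
        ((N:ℝ)+1) * r^N := by
      rw [div_div_eq_mul_div, mul_comm, mul_div_assoc]
      apply mul_le_mul_of_nonneg_left _ (by positivity)
      rw [← Real.exp_sub]
      rw [show r ^ N = Real.exp ((N:ℝ) * (fEnt α - fEnt β)) by
        rw [hr, ← Real.exp_nat_mul]]
      apply Real.exp_le_exp.mpr
      have : fEnt β ≤ fEnt p := hfp.le
      nlinarith [hN0.le]
    linarith
  · exact hglim
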